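/- Let T be a set of terminal letters disjoint from {S, A, B, C}. For every u ∈ {CA, CAA}* and every v that is a concatenation of blocks from {BC, BBC} and letters from T, the word uSv contains neither CC nor AB as a factor. -/

import Mathlib

inductive Sym8 (T : Type) : Type
  | S : Sym8 T
  | A : Sym8 T
  | B : Sym8 T
  | C : Sym8 T
  | term : T → Sym8 T

open Sym8

/-- The blocks `CA` and `CAA`. -/
def ublock8 (T : Type) (b : Bool) : List (Sym8 T) :=
  if b then [C, A, A] else [C, A]

/-- A block `BC`, a block `BBC`, or a terminal letter from `T`. -/
def vblock8 (T : Type) : Bool ⊕ T → List (Sym8 T)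
  | Sum.inl false => [B, C]
  | Sum.inl true => [B, B, C]
  | Sum.inr t => [term t]

/-- Allowed adjacent pairs: not `CC` and not `AB`. -/
def R8 (T : Type) : Sym8 T → Sym8 T → Prop :=
  fun a b => ¬(a = C ∧ b = C) ∧ ¬(a = A ∧ b = B)

lemma R8_S (T : Type) (b : Sym8 T) : R8 T S b := by
  constructor <;> rintro ⟨h, h2⟩ <;> cases h

lemma R8_B (T : Type) (b : Sym8 T) : R8 T B b := by
  constructor <;> rintro ⟨h, h2⟩ <;> cases h

lemma R8_term (T : Type) (t : T) (b : Sym8 T) : R8 T (term t) b := by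
  constructor <;> rintro ⟨h, h2⟩ <;> cases h

lemma R8_C (T : Type) (b : Sym8 T) (h : b ≠ C) : R8 T C b := by
  constructor <;> rintro ⟨h1, h2⟩
  · exact h h2
  · cases h1

lemma R8_A (T : Type) (b : Sym8 T) (h : b ≠ B) : R8 T A b := by
  constructor <;> rintro ⟨h1, h2⟩
  · cases h1
  · exact h h2

lemma Vgood (T : Type) (lv : List (Bool ⊕ T)) :
    List.IsChain (R8 T) ((lv.map (vblock8 T)).flatten) ∧
      ∀ x ∈ ((lv.map (vblock8 T)).flatten).head?, x ≠ C := by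
  induction lv with
  | nil => simp
  | cons x lv ih =>
    have hC : ∀ y ∈ ((lv.map (vblock8 T)).flatten).head?, R8 T C y :=
      fun y hy => R8_C T y (ih.2 y hy)
    rcases x with (b | t)
    · cases b <;>
        simp only [List.map_cons, List.flatten_cons, vblock8, List.cons_append,
          List.nil_append] <;>
        refine ⟨?_, by simp⟩
      · rw [List.isChain_cons]
        refine ⟨fun y hy => R8_B T y, ?_⟩
        rw [List.isChain_cons]
        exact ⟨hC, ih.1⟩
      · rw [List.isChain_cons]
        refine ⟨fun y hy => R8_B T y, ?_⟩
        rw [List.isChain_cons]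
        refine ⟨fun y hy => R8_B T y, ?_⟩
        rw [List.isChain_cons]
        exact ⟨hC, ih.1⟩
    · simp only [List.map_cons, List.flatten_cons, vblock8, List.cons_append,
        List.nil_append]
      rw [List.isChain_cons]
      exact ⟨⟨fun y _ => R8_term T t y, ih.1⟩, by simp⟩

lemma Ugood (T : Type) (lu : List Bool) (lv : List (Bool ⊕ T)) :
    List.IsChain (R8 T)
        ((lu.map (ublock8 T)).flatten ++ [S] ++ (lv.map (vblock8 T)).flatten) ∧
      ∀ x ∈ ((lu.map (ublock8 T)).flatten ++ [S] ++
          (lv.map (vblock8 T)).flatten).head?, x = C ∨ x = S := by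
  induction lu with
  | nil =>
    simp only [List.map_nil, List.flatten_nil, List.nil_append, List.cons_append]
    rw [List.isChain_cons]
    exact ⟨⟨fun y _ => R8_S T y, (Vgood T lv).1⟩, by simp⟩
  | cons b lu ih =>
    set W := (lu.map (ublock8 T)).flatten ++ [S] ++ (lv.map (vblock8 T)).flatten with hW
    have hA : ∀ y ∈ W.head?, R8 T A y := by
      intro y hy
      rcases ih.2 y hy with h | h <;> subst h
      · exact R8_A T _ (by simp)
      · exact R8_A T _ (by simp)
    have hne : W ≠ [] := by
      simp [hW]
    have hstep : (ublock8 T b ++ (lu.map (ublock8 T)).flatten) ++ [S] ++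
        (lv.map (vblock8 T)).flatten = ublock8 T b ++ W := by
      simp [hW, List.append_assoc]
    cases b <;> (simp only [List.map_cons, List.flatten_cons]; rw [hstep])
    · rw [show ublock8 T false = ([C, A] : List (Sym8 T)) from rfl]
      simp only [List.cons_append, List.nil_append]
      refine ⟨?_, ?_⟩
      · rw [List.isChain_cons]
        refine ⟨fun y hy => R8_C T y (by simp at hy; simp [← hy]), ?_⟩
        rw [List.isChain_cons]
        exact ⟨hA, ih.1⟩
      · simp
    · rw [show ublock8 T true = ([C, A, A] : List (Sym8 T)) from rfl]
      simp only [List.cons_append, List.nil_append]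
      refine ⟨?_, ?_⟩
      · rw [List.isChain_cons]
        refine ⟨fun y hy => R8_C T y (by simp at hy; simp [← hy]), ?_⟩
        rw [List.isChain_cons]
        refine ⟨fun y hy => R8_A T y (by simp at hy; simp [← hy]), ?_⟩
        rw [List.isChain_cons]
        exact ⟨hA, ih.1⟩
      · simp

theorem stmt8 (T : Type) (lu : List Bool) (lv : List (Bool ⊕ T)) :
    ¬ [C, C] <:+: ((lu.map (ublock8 T)).flatten ++ [S] ++ (lv.map (vblock8 T)).flatten) ∧
    ¬ [A, B] <:+: ((lu.map (ublock8 T)).flatten ++ [S] ++ (lv.map (vblock8 T)).flatten) := by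
  have hc := (Ugood T lu lv).1
  constructor <;> intro h <;> have h2 := hc.infix h <;>
    rw [List.isChain_pair] at h2
  · exact h2.1 ⟨rfl, rfl⟩
  · exact h2.2 ⟨rfl, rfl⟩
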